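/- Let G be the ONCF-gadget and let c : {g1,…,g10} → {red, blue} be a 2-coloring such that for each i with 4 ≤ i ≤ 9 the open neighborhood N(g_i) contains a uniquely colored vertex (there exists u ∈ N(g_i) with c(u) ≠ c(w) for all w ∈ N(g_i), w ≠ u). If c(g1) = c(g2) = c(g3) = red, then c(g9) = red. -/
import Mathlib


inductive Color where
  | red
  | blue
deriving DecidableEq

/-- The ONCF-gadget: a graph on ten vertices `g1, …, g10` (here indexed `0, …, 9`)
with edges g1g4, g2g4, g2g5, g3g5, g4g6, g5g7, g6g8, g7g8, g8g9, g9g10. -/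
def oncfGadget : SimpleGraph (Fin 10) :=
  SimpleGraph.fromEdgeSet
    {s(0, 3), s(1, 3), s(1, 4), s(2, 4), s(3, 5),
     s(4, 6), s(5, 7), s(6, 7), s(7, 8), s(8, 9)}

/-- Explicit neighbor lists for the middle vertices of the ONCF-gadget. -/
def nbr : Fin 10 → List (Fin 10)
  | 3 => [0, 1, 5]
  | 4 => [1, 2, 6]
  | 5 => [3, 7]
  | 6 => [4, 7]
  | 7 => [5, 6, 8]
  | 8 => [7, 9]
  | _ => []

lemma mem_nbr (i : Fin 10) (hi : 3 ≤ i.val) (hi' : i.val ≤ 8) (u : Fin 10) :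
    u ∈ oncfGadget.neighborSet i ↔ u ∈ nbr i := by
  simp only [SimpleGraph.mem_neighborSet, oncfGadget, SimpleGraph.fromEdgeSet_adj,
    Set.mem_insert_iff, Set.mem_singleton_iff, Sym2.eq_iff]
  fin_cases i <;> simp_all <;> fin_cases u <;> decide

set_option maxHeartbeats 2000000 in
/-- If `c` is a 2-coloring of the ONCF-gadget such that for every `i` with
`4 ≤ i ≤ 9` (i.e. indices `3 ≤ i ≤ 8`) the open neighborhood of `g_i` contains a
uniquely colored vertex, and `g1, g2, g3` are all red, then `g9` is red. -/
theorem oncfGadget_all_red (c : Fin 10 → Color)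
    (h : ∀ i : Fin 10, 3 ≤ i.val → i.val ≤ 8 →
      ∃ u ∈ oncfGadget.neighborSet i,
        ∀ w ∈ oncfGadget.neighborSet i, w ≠ u → c w ≠ c u)
    (h1 : c 0 = Color.red) (h2 : c 1 = Color.red) (h3 : c 2 = Color.red) :
    c 8 = Color.red := by
  have H : ∀ i : Fin 10, 3 ≤ i.val → i.val ≤ 8 →
      ∃ u ∈ nbr i, ∀ w ∈ nbr i, w ≠ u → c w ≠ c u := by
    intro i hi hi'
    obtain ⟨u, hu, hq⟩ := h i hi hi'
    exact ⟨u, (mem_nbr i hi hi' u).1 hu, fun w hw => hq w ((mem_nbr i hi hi' w).2 hw)⟩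
  have H3 := H 3 (by decide) (by decide)
  have H4 := H 4 (by decide) (by decide)
  have H5 := H 5 (by decide) (by decide)
  have H6 := H 6 (by decide) (by decide)
  have H7 := H 7 (by decide) (by decide)
  have H8 := H 8 (by decide) (by decide)
  have e3 : nbr 3 = [0, 1, 5] := rfl
  have e4 : nbr 4 = [1, 2, 6] := rfl
  have e5 : nbr 5 = [3, 7] := rfl
  have e6 : nbr 6 = [4, 7] := rfl
  have e7 : nbr 7 = [5, 6, 8] := rfl
  have e8 : nbr 8 = [7, 9] := rfl
  rw [e3] at H3; rw [e4] at H4; rw [e5] at H5; rw [e6] at H6; rw [e7] at H7; rw [e8] at H8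
  simp only [List.mem_cons, List.not_mem_nil, or_false,
    exists_eq_or_imp, exists_eq_left, forall_eq_or_imp, forall_eq] at H3 H4 H5 H6 H7 H8
  clear h H e3 e4 e5 e6 e7 e8
  cases hc3 : c 3 <;> cases hc4 : c 4 <;> cases hc5 : c 5 <;> cases hc6 : c 6 <;>
    cases hc7 : c 7 <;> cases hc8 : c 8 <;> cases hc9 : c 9 <;> simp_all
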